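/- Let U, V ⊆ ℝⁿ be open and φ : V → U a C^∞ diffeomorphism with inverse ψ = φ⁻¹. Let Δ be a second-order differential operator on C^∞(U) with smooth coefficients S^{ab} = S^{ba}, T^a, R, let Δ' be its pullback to V with coefficients S'^{kl}, T'^k, R', and set γ^a := Σ_b ∂_b S^{ba} − 2T^a on U and γ'^k := Σ_l ∂_l S'^{lk} − 2T'^k on V. Then the subprincipal symbol transforms as an upper connection in the bundle of volume forms: for all y ∈ V, γ'^k(y) = Σ_a [ γ^a(φ(y)) + Σ_b S^{ab}(φ(y)) · ∂_b( ln|det Dψ| )(φ(y)) ] · (∂_a ψ^k)(φ(y)), where Dψ denotes the Jacobian matrix of ψ. -/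

import Mathlib

open scoped BigOperators

/-- Partial derivative `∂_a f` of a function on `ℝⁿ`. -/
noncomputable def pd {n : ℕ} (a : Fin n) (f : (Fin n → ℝ) → ℝ) : (Fin n → ℝ) → ℝ :=
  fun x => fderiv ℝ f x (Pi.single a 1)

/-- The second-order differential operator
`Δf = (1/2)·Σ_{a,b} S^{ab} ∂_a∂_b f + Σ_a T^a ∂_a f + R·f`. -/
noncomputable def secondOrderOp {n : ℕ} (S : Fin n → Fin n → (Fin n → ℝ) → ℝ)
    (T : Fin n → (Fin n → ℝ) → ℝ) (R : (Fin n → ℝ) → ℝ)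
    (f : (Fin n → ℝ) → ℝ) : (Fin n → ℝ) → ℝ :=
  fun x => (1/2) * (∑ a, ∑ b, S a b x * pd a (pd b f) x)
    + (∑ a, T a x * pd a f x) + R x * f x

/-- The Jacobian matrix `(∂_j ψ^i)` of a map `ψ : ℝⁿ → ℝⁿ` at a point. -/
noncomputable def jacobian {n : ℕ} (ψ : (Fin n → ℝ) → (Fin n → ℝ)) (x : Fin n → ℝ) :
    Matrix (Fin n) (Fin n) ℝ :=
  Matrix.of fun i j => pd j (fun z => ψ z i) x

/-- The subprincipal symbol components `γ^a := Σ_b ∂_b S^{ba} − 2T^a`. -/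
noncomputable def subSymbol {n : ℕ} (S : Fin n → Fin n → (Fin n → ℝ) → ℝ)
    (T : Fin n → (Fin n → ℝ) → ℝ) (a : Fin n) : (Fin n → ℝ) → ℝ :=
  fun x => (∑ b, pd b (S b a) x) - 2 * T a x


section Helpers

variable {n : ℕ}

theorem le_top' {m : ℕ∞} : ((m : WithTop ℕ∞)) ≤ ((⊤:ℕ∞) : WithTop ℕ∞) := by
  exact_mod_cast (le_top : m ≤ ⊤)

theorem pd_congr {f g : (Fin n → ℝ) → ℝ} {x : Fin n → ℝ} (h : f =ᶠ[nhds x] g) (a : Fin n) :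
    pd a f x = pd a g x := by
  simp only [pd, h.fderiv_eq]

theorem pd_eq {f : (Fin n → ℝ) → ℝ} {x : Fin n → ℝ} {L : (Fin n → ℝ) →L[ℝ] ℝ}
    (h : HasFDerivAt f L x) (a : Fin n) : pd a f x = L (Pi.single a 1) := by
  simp only [pd, h.fderiv]

theorem pd_const (c : ℝ) (a : Fin n) (x : Fin n → ℝ) : pd a (fun _ => c) x = 0 := by
  simp [pd]

theorem pd_add {f g : (Fin n → ℝ) → ℝ} {x : Fin n → ℝ}
    (hf : DifferentiableAt ℝ f x) (hg : DifferentiableAt ℝ g x) (a : Fin n) :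
    pd a (fun x => f x + g x) x = pd a f x + pd a g x := by
  rw [pd_eq (hf.hasFDerivAt.fun_add hg.hasFDerivAt)]
  simp [pd]

theorem pd_mul {f g : (Fin n → ℝ) → ℝ} {x : Fin n → ℝ}
    (hf : DifferentiableAt ℝ f x) (hg : DifferentiableAt ℝ g x) (a : Fin n) :
    pd a (fun x => f x * g x) x = pd a f x * g x + f x * pd a g x := by
  rw [pd_eq (hf.hasFDerivAt.fun_mul hg.hasFDerivAt)]
  simp [pd]; ring

theorem pd_sum {ι : Type*} {s : Finset ι} {f : ι → (Fin n → ℝ) → ℝ} {x : Fin n → ℝ}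
    (h : ∀ i ∈ s, DifferentiableAt ℝ (f i) x) (a : Fin n) :
    pd a (fun x => ∑ i ∈ s, f i x) x = ∑ i ∈ s, pd a (f i) x := by
  rw [pd_eq (HasFDerivAt.fun_sum (fun i hi => (h i hi).hasFDerivAt))]
  simp [pd]

theorem pd_const_mul {f : (Fin n → ℝ) → ℝ} {x : Fin n → ℝ} (c : ℝ)
    (hf : DifferentiableAt ℝ f x) (a : Fin n) :
    pd a (fun x => c * f x) x = c * pd a f x := by
  rw [pd_eq ((hf.hasFDerivAt).const_mul c)]
  simp [pd]

theorem clm_apply_eq_sum {L : (Fin n → ℝ) →L[ℝ] ℝ} (v : Fin n → ℝ) :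
    L v = ∑ c, v c * L (Pi.single c 1) := by
  have hv : v = ∑ c, v c • (Pi.single c 1 : Fin n → ℝ) := by
    ext j; simp [Pi.single_apply]
  conv_lhs => rw [hv]
  rw [map_sum]
  simp [mul_comm]

theorem hasFDerivAt_coord {φ : (Fin n → ℝ) → (Fin n → ℝ)} {y : Fin n → ℝ}
    (hφ : DifferentiableAt ℝ φ y) (c : Fin n) :
    HasFDerivAt (fun z => φ z c)
      ((ContinuousLinearMap.proj c : (Fin n → ℝ) →L[ℝ] ℝ).comp (fderiv ℝ φ y)) y := by
  have h := ((ContinuousLinearMap.proj c : (Fin n → ℝ) →L[ℝ] ℝ).hasFDerivAt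
      (x := φ y)).comp y hφ.hasFDerivAt
  exact h.congr_of_eventuallyEq (Filter.Eventually.of_forall fun z => rfl)

theorem pd_comp {φ : (Fin n → ℝ) → (Fin n → ℝ)} {F : (Fin n → ℝ) → ℝ} {y : Fin n → ℝ}
    (hφ : DifferentiableAt ℝ φ y) (hF : DifferentiableAt ℝ F (φ y)) (l : Fin n) :
    pd l (fun z => F (φ z)) y = ∑ c, pd c F (φ y) * pd l (fun z => φ z c) y := by
  have h : HasFDerivAt (fun z => F (φ z))
      ((fderiv ℝ F (φ y)).comp (fderiv ℝ φ y)) y :=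
    (hF.hasFDerivAt.comp y hφ.hasFDerivAt).congr_of_eventuallyEq
      (Filter.Eventually.of_forall fun z => rfl)
  rw [pd_eq h]
  simp only [ContinuousLinearMap.coe_comp', Function.comp_apply]
  rw [clm_apply_eq_sum]
  refine Finset.sum_congr rfl fun c _ => ?_
  rw [pd_eq (hasFDerivAt_coord hφ c)]
  simp [pd, mul_comm]

theorem pd_proj (k a : Fin n) (x : Fin n → ℝ) :
    pd a (fun y => y k) x = if a = k then 1 else 0 := by
  have h : HasFDerivAt (fun y : Fin n → ℝ => y k)
      (ContinuousLinearMap.proj k : (Fin n → ℝ) →L[ℝ] ℝ) x :=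
    ((ContinuousLinearMap.proj k : (Fin n → ℝ) →L[ℝ] ℝ).hasFDerivAt).congr_of_eventuallyEq
      (Filter.Eventually.of_forall fun z => rfl)
  rw [pd_eq h]
  simp [Pi.single_apply, eq_comm]

theorem diffAt_of_contDiffOn {U : Set (Fin n → ℝ)} {f : (Fin n → ℝ) → ℝ} {x : Fin n → ℝ}
    (hU : IsOpen U) (hf : ContDiffOn ℝ (⊤ : ℕ∞) f U) (hx : x ∈ U) :
    DifferentiableAt ℝ f x :=
  (hf.differentiableOn (by simp)).differentiableAt (hU.mem_nhds hx)

theorem contDiffOn_pd {U : Set (Fin n → ℝ)} {f : (Fin n → ℝ) → ℝ}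
    (hU : IsOpen U) (hf : ContDiffOn ℝ (⊤ : ℕ∞) f U) (b : Fin n) :
    ContDiffOn ℝ (⊤ : ℕ∞) (pd b f) U := by
  have h1 : ContDiffOn ℝ (⊤ : ℕ∞) (fderiv ℝ f) U :=
    hf.fderiv_of_isOpen hU le_top'
  exact (ContinuousLinearMap.apply ℝ ℝ (Pi.single b (1:ℝ))).contDiff.comp_contDiffOn h1

theorem pd_pd_eq {f : (Fin n → ℝ) → ℝ} {x : Fin n → ℝ}
    (hf : DifferentiableAt ℝ (fderiv ℝ f) x) (a b : Fin n) :
    pd a (pd b f) x = fderiv ℝ (fderiv ℝ f) x (Pi.single a 1) (Pi.single b 1) := by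
  have h0 := ((ContinuousLinearMap.apply ℝ ℝ (Pi.single b (1:ℝ))).hasFDerivAt
      (x := fderiv ℝ f x)).comp x hf.hasFDerivAt
  have h : HasFDerivAt (pd b f)
      ((ContinuousLinearMap.apply ℝ ℝ (Pi.single b (1:ℝ))).comp
        (fderiv ℝ (fderiv ℝ f) x)) x :=
    h0.congr_of_eventuallyEq (Filter.Eventually.of_forall fun z => rfl)
  rw [pd_eq h]
  rfl

theorem pd_pd_symm {U : Set (Fin n → ℝ)} {f : (Fin n → ℝ) → ℝ} {x : Fin n → ℝ}
    (hU : IsOpen U) (hf : ContDiffOn ℝ (⊤ : ℕ∞) f U) (hx : x ∈ U) (a b : Fin n) :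
    pd a (pd b f) x = pd b (pd a f) x := by
  have hca : ContDiffAt ℝ (⊤ : ℕ∞) f x := (hf x hx).contDiffAt (hU.mem_nhds hx)
  have hsym := hca.isSymmSndFDerivAt (by simp; exact WithTop.coe_le_coe.2 le_top)
  have hdf : DifferentiableAt ℝ (fderiv ℝ f) x := by
    have h1 : ContDiffOn ℝ (⊤ : ℕ∞) (fderiv ℝ f) U :=
      hf.fderiv_of_isOpen hU le_top'
    exact (h1.differentiableOn (by simp)).differentiableAt (hU.mem_nhds hx)
  rw [pd_pd_eq hdf, pd_pd_eq hdf]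
  exact hsym _ _

theorem pd_prod {ι : Type*} [DecidableEq ι] {u : Finset ι} {f : ι → (Fin n → ℝ) → ℝ}
    {x : Fin n → ℝ} (h : ∀ i ∈ u, DifferentiableAt ℝ (f i) x) (b : Fin n) :
    pd b (fun z => ∏ i ∈ u, f i z) x
      = ∑ i ∈ u, (∏ j ∈ u.erase i, f j x) * pd b (f i) x := by
  have h0 : HasFDerivAt (fun z => ∏ i ∈ u, f i z)
      (∑ i ∈ u, (∏ j ∈ u.erase i, f j x) • fderiv ℝ (f i) x) x :=
    (HasFDerivAt.finset_prod (fun i hi => (h i hi).hasFDerivAt)).congr_of_eventuallyEq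
      (Filter.Eventually.of_forall fun z => rfl)
  rw [pd_eq h0]
  simp [pd]

theorem diffAt_det {M : (Fin n → ℝ) → Matrix (Fin n) (Fin n) ℝ} {x : Fin n → ℝ}
    (h : ∀ i j, DifferentiableAt ℝ (fun z => M z i j) x) :
    DifferentiableAt ℝ (fun z => (M z).det) x := by
  have hdet : (fun z => (M z).det)
      = fun z => ∑ σ : Equiv.Perm (Fin n), ((Equiv.Perm.sign σ : ℤ) : ℝ) * ∏ i, M z (σ i) i :=
    funext fun z => Matrix.det_apply' _
  rw [hdet]
  refine DifferentiableAt.fun_sum fun σ _ => DifferentiableAt.const_mul ?_ _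
  exact ((HasFDerivAt.finset_prod (u := Finset.univ) (g := fun i z => M z (σ i) i)
      (fun i _ => (h (σ i) i).hasFDerivAt)).congr_of_eventuallyEq
      (Filter.Eventually.of_forall fun z => rfl)).differentiableAt

theorem pd_det {M : (Fin n → ℝ) → Matrix (Fin n) (Fin n) ℝ} {x : Fin n → ℝ}
    (h : ∀ i j, DifferentiableAt ℝ (fun z => M z i j) x) (b : Fin n) :
    pd b (fun z => (M z).det) x
      = ∑ l, ∑ c, (M x).adjugate l c * pd b (fun z => M z c l) x := by
  have hdet : (fun z => (M z).det)
      = fun z => ∑ σ : Equiv.Perm (Fin n), ((Equiv.Perm.sign σ : ℤ) : ℝ) * ∏ i, M z (σ i) i :=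
    funext fun z => Matrix.det_apply' _
  have hprod : ∀ σ : Equiv.Perm (Fin n),
      DifferentiableAt ℝ (fun z => ∏ i, M z (σ i) i) x := fun σ =>
    ((HasFDerivAt.finset_prod (u := Finset.univ) (g := fun i z => M z (σ i) i)
      (fun i _ => (h (σ i) i).hasFDerivAt)).congr_of_eventuallyEq
      (Filter.Eventually.of_forall fun z => rfl)).differentiableAt
  rw [hdet]
  rw [pd_sum (fun σ _ => ((hprod σ).const_mul _)) b]
  have key : ∀ σ : Equiv.Perm (Fin n),
      pd b (fun z => ((Equiv.Perm.sign σ : ℤ) : ℝ) * ∏ i, M z (σ i) i) x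
      = ((Equiv.Perm.sign σ : ℤ) : ℝ) * ∑ i, (∏ j ∈ Finset.univ.erase i, M x (σ j) j)
          * pd b (fun z => M z (σ i) i) x := by
    intro σ
    rw [pd_const_mul _ (hprod σ), pd_prod (fun i _ => h (σ i) i)]
  simp only [key]
  have expand : ∀ l : Fin n, ∑ c, (M x).adjugate l c * pd b (fun z => M z c l) x
      = ((M x).updateCol l (fun r => pd b (fun z => M z r l) x)).det := by
    intro l
    rw [← Matrix.cramer_apply, Matrix.cramer_eq_adjugate_mulVec]
    simp [Matrix.mulVec, dotProduct]
  simp only [expand, Matrix.det_apply']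
  rw [Finset.sum_comm]
  refine Finset.sum_congr rfl fun σ _ => ?_
  rw [Finset.mul_sum]
  refine Finset.sum_congr rfl fun l _ => ?_
  have : ∏ i, ((M x).updateCol l (fun r => pd b (fun z => M z r l) x)) (σ i) i
      = pd b (fun z => M z (σ l) l) x * ∏ j ∈ Finset.univ.erase l, M x (σ j) j := by
    rw [← Finset.mul_prod_erase Finset.univ _ (Finset.mem_univ l)]
    congr 1
    · simp [Matrix.updateCol_apply]
    · exact Finset.prod_congr rfl fun j hj => by
        simp [Matrix.updateCol_apply, (Finset.mem_erase.1 hj).1]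
  rw [this]
  ring

theorem contract_helper {J K : Fin n → Fin n → ℝ}
    (hKJ : ∀ c a : Fin n, (∑ l, K c l * J l a) = if c = a then 1 else 0)
    (E : Fin n → Fin n → Fin n → ℝ) :
    (∑ l, ∑ c, ∑ a, ∑ b, E c a b * J l a * K c l) = ∑ a, ∑ b, E a a b := by
  rw [Finset.sum_comm]
  calc (∑ c, ∑ l, ∑ a, ∑ b, E c a b * J l a * K c l)
      = ∑ c, ∑ a, ∑ b, E c a b * ∑ l, K c l * J l a := by
        refine Finset.sum_congr rfl fun c _ => ?_
        rw [Finset.sum_comm]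
        refine Finset.sum_congr rfl fun a _ => ?_
        rw [Finset.sum_comm]
        refine Finset.sum_congr rfl fun b _ => ?_
        rw [Finset.mul_sum]
        exact Finset.sum_congr rfl fun l _ => by ring
    _ = ∑ c, ∑ a, ∑ b, if c = a then E c a b else 0 := by
        refine Finset.sum_congr rfl fun c _ => Finset.sum_congr rfl fun a _ =>
          Finset.sum_congr rfl fun b _ => ?_
        rw [hKJ c a]
        simp [mul_ite]
    _ = ∑ a, ∑ b, E a a b := by
        rw [Finset.sum_comm]
        refine Finset.sum_congr rfl fun a _ => ?_
        rw [Finset.sum_comm]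
        refine Finset.sum_congr rfl fun b _ => ?_
        simp [Finset.sum_ite_eq', Finset.mem_univ]

theorem sum_block_swap (f : Fin n → Fin n → Fin n → Fin n → ℝ) :
    (∑ a, ∑ b, ∑ l, ∑ c, f a b l c) = ∑ l, ∑ c, ∑ a, ∑ b, f a b l c := by
  calc (∑ a, ∑ b, ∑ l, ∑ c, f a b l c)
      = ∑ a, ∑ l, ∑ b, ∑ c, f a b l c :=
        Finset.sum_congr rfl fun a _ => Finset.sum_comm
    _ = ∑ l, ∑ a, ∑ b, ∑ c, f a b l c := Finset.sum_comm
    _ = ∑ l, ∑ a, ∑ c, ∑ b, f a b l c :=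
        Finset.sum_congr rfl fun l _ => Finset.sum_congr rfl fun a _ => Finset.sum_comm
    _ = ∑ l, ∑ c, ∑ a, ∑ b, f a b l c :=
        Finset.sum_congr rfl fun l _ => Finset.sum_comm

end Helpers

/-- under the pullback of a second-order operator by a `C^∞`
diffeomorphism `φ : V → U` with inverse `ψ`, the subprincipal symbol transforms as an
upper connection in the bundle of volume forms:
`γ'^k = Σ_a [γ^a + Σ_b S^{ab} ∂_b(ln|det Dψ|)] ∘ φ · ∂_aψ^k ∘ φ`. -/
theorem subSymbol_transforms_as_upper_connection {n : ℕ} (U V : Set (Fin n → ℝ))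
    (hU : IsOpen U) (hV : IsOpen V)
    (φ ψ : (Fin n → ℝ) → (Fin n → ℝ))
    (hφ : ContDiffOn ℝ (⊤ : ℕ∞) φ V) (hψ : ContDiffOn ℝ (⊤ : ℕ∞) ψ U)
    (hφV : Set.MapsTo φ V U) (hψU : Set.MapsTo ψ U V)
    (hψφ : ∀ y ∈ V, ψ (φ y) = y) (hφψ : ∀ x ∈ U, φ (ψ x) = x)
    (S : Fin n → Fin n → (Fin n → ℝ) → ℝ)
    (T : Fin n → (Fin n → ℝ) → ℝ) (R : (Fin n → ℝ) → ℝ)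
    (hS : ∀ a b, ContDiffOn ℝ (⊤ : ℕ∞) (S a b) U) (hSsym : ∀ a b, S a b = S b a)
    (hT : ∀ a, ContDiffOn ℝ (⊤ : ℕ∞) (T a) U) (hR : ContDiffOn ℝ (⊤ : ℕ∞) R U)
    -- `S'`, `T'`, `R'` are the coefficients of the pullback operator `Δ'g = (Δ(g∘ψ))∘φ`:
    (S' : Fin n → Fin n → (Fin n → ℝ) → ℝ)
    (T' : Fin n → (Fin n → ℝ) → ℝ) (R' : (Fin n → ℝ) → ℝ)
    (hS' : ∀ k l, ContDiffOn ℝ (⊤ : ℕ∞) (S' k l) V) (hS'sym : ∀ k l, S' k l = S' l k)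
    (hT' : ∀ k, ContDiffOn ℝ (⊤ : ℕ∞) (T' k) V) (hR' : ContDiffOn ℝ (⊤ : ℕ∞) R' V)
    (hpull : ∀ g : (Fin n → ℝ) → ℝ, ContDiffOn ℝ (⊤ : ℕ∞) g V → ∀ y ∈ V,
      secondOrderOp S T R (fun x => g (ψ x)) (φ y) = secondOrderOp S' T' R' g y)
    (y : Fin n → ℝ) (hy : y ∈ V) (k : Fin n) :
    subSymbol S' T' k y
    = ∑ a, (subSymbol S T a (φ y)
          + ∑ b, S a b (φ y) * pd b (fun x => Real.log |(jacobian ψ x).det|) (φ y))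
        * pd a (fun x => ψ x k) (φ y) := by
  -- notation
  have hx : φ y ∈ U := hφV hy
  have hψcd : ∀ i, ContDiffOn ℝ (⊤ : ℕ∞) (fun z => ψ z i) U := fun i =>
    (ContinuousLinearMap.proj i : (Fin n → ℝ) →L[ℝ] ℝ).contDiff.comp_contDiffOn hψ
  have hφcd : ∀ i, ContDiffOn ℝ (⊤ : ℕ∞) (fun z => φ z i) V := fun i =>
    (ContinuousLinearMap.proj i : (Fin n → ℝ) →L[ℝ] ℝ).contDiff.comp_contDiffOn hφ
  have hψdiff : ∀ x' ∈ U, DifferentiableAt ℝ ψ x' := fun x' hx' =>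
    (hψ.differentiableOn (by simp)).differentiableAt (hU.mem_nhds hx')
  have hφdiff : ∀ y' ∈ V, DifferentiableAt ℝ φ y' := fun y' hy' =>
    (hφ.differentiableOn (by simp)).differentiableAt (hV.mem_nhds hy')
  -- the Jacobian entry functions are smooth on U resp. V
  have hJcd : ∀ l a, ContDiffOn ℝ (⊤ : ℕ∞) (pd a (fun z => ψ z l)) U := fun l a =>
    contDiffOn_pd hU (hψcd l) a
  -- abbreviations for the atoms at the point x = φ y
  set x : Fin n → ℝ := φ y with hxdef
  -- F1 : Dφ(y) * Dψ(x) = 1  (entrywise)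
  have F1 : ∀ c a : Fin n, (∑ l, pd l (fun z => φ z c) y * pd a (fun z => ψ z l) x)
      = if c = a then 1 else 0 := by
    intro c a
    have hd1 : DifferentiableAt ℝ (fun w => φ w c) (ψ x) := by
      rw [hxdef, hψφ y hy]
      exact diffAt_of_contDiffOn hV (hφcd c) hy
    have h1 := pd_comp (φ := ψ) (F := fun w => φ w c) (hψdiff x hx) hd1 a
    have hev : (fun x' => φ (ψ x') c) =ᶠ[nhds x] (fun x' => x' c) := by
      filter_upwards [hU.mem_nhds hx] with x' hx'
      rw [hφψ x' hx']
    rw [pd_congr hev a, pd_proj c a x] at h1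
    rw [hxdef, hψφ y hy] at h1
    rw [← h1]
    simp [eq_comm]
  -- F2 : Dψ(x) * Dφ(y) = 1  (entrywise)
  have F2 : ∀ l m : Fin n, (∑ a, pd a (fun z => ψ z l) x * pd m (fun z => φ z a) y)
      = if m = l then 1 else 0 := by
    intro l m
    have hd1 : DifferentiableAt ℝ (fun w => ψ w l) (φ y) :=
      diffAt_of_contDiffOn hU (hψcd l) hx
    have h1 := pd_comp (φ := φ) (F := fun w => ψ w l) (hφdiff y hy) hd1 m
    have hev : (fun y' => ψ (φ y') l) =ᶠ[nhds y] (fun y' => y' l) := by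
      filter_upwards [hV.mem_nhds hy] with y' hy'
      rw [hψφ y' hy']
    rw [pd_congr hev m, pd_proj l m y] at h1
    rw [← h1]
  -- F3 : R' = R ∘ φ on V
  have F3 : ∀ y' ∈ V, R' y' = R (φ y') := by
    intro y' hy'
    have h := hpull (fun _ => (1:ℝ)) contDiffOn_const y' hy'
    have hc : ∀ b : Fin n, pd b (fun _ : Fin n → ℝ => (1:ℝ)) = fun _ => (0:ℝ) :=
      fun b => funext fun z => pd_const 1 b z
    simp only [secondOrderOp, hc, pd_const] at h
    simp at h
    linarith [h]
  -- F4 : formula for T'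
  have F4 : ∀ y' ∈ V, ∀ k' : Fin n, T' k' y'
      = (1/2) * ∑ a, ∑ b, S a b (φ y') * pd a (pd b (fun z => ψ z k')) (φ y')
        + ∑ a, T a (φ y') * pd a (fun z => ψ z k') (φ y') := by
    intro y' hy' k'
    have hx' : φ y' ∈ U := hφV hy'
    have h := hpull (fun w => w k')
      ((ContinuousLinearMap.proj k' : (Fin n → ℝ) →L[ℝ] ℝ).contDiff.contDiffOn) y' hy'
    have hgrad : ∀ b : Fin n, pd b (fun w : Fin n → ℝ => w k')
        = fun _ => if b = k' then (1:ℝ) else 0 :=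
      fun b => funext fun z => pd_proj k' b z
    simp only [secondOrderOp, hgrad, pd_const] at h
    rw [hψφ y' hy'] at h
    rw [F3 y' hy'] at h
    simp [mul_ite, mul_one, mul_zero, Finset.sum_ite_eq'] at h
    linarith [h]
  -- F5 : formula for S'
  have F5 : ∀ y' ∈ V, ∀ k' l' : Fin n, S' k' l' y'
      = ∑ a, ∑ b, S a b (φ y') * pd a (fun z => ψ z k') (φ y')
          * pd b (fun z => ψ z l') (φ y') := by
    intro y' hy' k' l'
    have hx' : φ y' ∈ U := hφV hy'
    have hprojd : ∀ (m : Fin n) (z : Fin n → ℝ), DifferentiableAt ℝ (fun w : Fin n → ℝ => w m) z := by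
      intro m z
      exact (((ContinuousLinearMap.proj m : (Fin n → ℝ) →L[ℝ] ℝ).hasFDerivAt).congr_of_eventuallyEq
        (Filter.Eventually.of_forall fun w => rfl)).differentiableAt
    have hprojcd : ∀ m : Fin n, ContDiff ℝ (⊤:ℕ∞) (fun w : Fin n → ℝ => w m) := by
      intro m
      exact (ContinuousLinearMap.proj m : (Fin n → ℝ) →L[ℝ] ℝ).contDiff
    have hgcd : ContDiffOn ℝ (⊤:ℕ∞) (fun w : Fin n → ℝ => w k' * w l') V :=
      ((hprojcd k').mul (hprojcd l')).contDiffOn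
    have hpdg : ∀ b : Fin n, pd b (fun w : Fin n → ℝ => w k' * w l')
        = fun w => (if b = k' then (1:ℝ) else 0) * w l' + w k' * (if b = l' then (1:ℝ) else 0) := by
      intro b; funext z
      rw [pd_mul (hprojd k' z) (hprojd l' z), pd_proj, pd_proj]
    have hpdpdg : ∀ (a b : Fin n) (z : Fin n → ℝ), pd a (pd b (fun w : Fin n → ℝ => w k' * w l')) z
        = (if b = k' then (1:ℝ) else 0) * (if a = l' then (1:ℝ) else 0)
          + (if a = k' then (1:ℝ) else 0) * (if b = l' then (1:ℝ) else 0) := by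
      intro a b z
      rw [hpdg b]
      rw [pd_add ((differentiableAt_const _).fun_mul (hprojd l' z)) ((hprojd k' z).fun_mul (differentiableAt_const _))]
      rw [pd_const_mul _ (hprojd l' z), pd_proj]
      rw [pd_mul (hprojd k' z) (differentiableAt_const _), pd_const, pd_proj]
      ring
    have hpdag : ∀ (a : Fin n) (z : Fin n → ℝ), pd a (fun w : Fin n → ℝ => w k' * w l') z
        = (if a = k' then (1:ℝ) else 0) * z l' + z k' * (if a = l' then (1:ℝ) else 0) := by
      intro a z; rw [pd_mul (hprojd k' z) (hprojd l' z), pd_proj, pd_proj]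
    have hψd : ∀ (m : Fin n), ∀ x'' ∈ U, DifferentiableAt ℝ (fun z => ψ z m) x'' :=
      fun m x'' h'' => diffAt_of_contDiffOn hU (hψcd m) h''
    have hpdψd : ∀ (m b : Fin n), ∀ x'' ∈ U, DifferentiableAt ℝ (pd b (fun z => ψ z m)) x'' :=
      fun m b x'' h'' => diffAt_of_contDiffOn hU (contDiffOn_pd hU (hψcd m) b) h''
    have hpdf : ∀ b : Fin n, pd b (fun z => ψ z k' * ψ z l')
        =ᶠ[nhds (φ y')] fun z => pd b (fun w => ψ w k') z * ψ z l'
            + ψ z k' * pd b (fun w => ψ w l') z := by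
      intro b
      filter_upwards [hU.mem_nhds hx'] with z hz
      rw [pd_mul (hψd k' z hz) (hψd l' z hz)]
    have hpdpdf : ∀ a b : Fin n, pd a (pd b (fun z => ψ z k' * ψ z l')) (φ y')
        = pd a (pd b (fun w => ψ w k')) (φ y') * ψ (φ y') l'
          + pd b (fun w => ψ w k') (φ y') * pd a (fun w => ψ w l') (φ y')
          + (pd a (fun w => ψ w k') (φ y') * pd b (fun w => ψ w l') (φ y')
          + ψ (φ y') k' * pd a (pd b (fun w => ψ w l')) (φ y')) := by
      intro a b
      rw [pd_congr (hpdf b) a]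
      rw [pd_add ((hpdψd k' b _ hx').fun_mul (hψd l' _ hx')) ((hψd k' _ hx').fun_mul (hpdψd l' b _ hx'))]
      rw [pd_mul (hpdψd k' b _ hx') (hψd l' _ hx'), pd_mul (hψd k' _ hx') (hpdψd l' b _ hx')]
    have hpdaf : ∀ a : Fin n, pd a (fun z => ψ z k' * ψ z l') (φ y')
        = pd a (fun w => ψ w k') (φ y') * ψ (φ y') l'
          + ψ (φ y') k' * pd a (fun w => ψ w l') (φ y') :=
      fun a => pd_mul (hψd k' _ hx') (hψd l' _ hx') a
    have h := hpull (fun w => w k' * w l') hgcd y' hy'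
    simp only [secondOrderOp, hpdpdf, hpdaf, hpdpdg, hpdag] at h
    rw [hψφ y' hy', F3 y' hy'] at h
    have hc1 : (∑ a : Fin n, ∑ b : Fin n, S' a b y' *
          (((if b = k' then (1:ℝ) else 0) * if a = l' then 1 else 0)
            + (if a = k' then 1 else 0) * if b = l' then 1 else 0))
        = S' l' k' y' + S' k' l' y' := by
      simp [mul_add, Finset.sum_add_distrib, mul_ite, ite_mul, mul_one, mul_zero, zero_mul,
        Finset.sum_ite_eq, Finset.sum_ite_eq', Finset.mem_univ]
    have hc2 : (∑ a : Fin n, T' a y' *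
          ((if a = k' then (1:ℝ) else 0) * y' l' + y' k' * if a = l' then 1 else 0))
        = T' k' y' * y' l' + y' k' * T' l' y' := by
      simp [mul_add, Finset.sum_add_distrib, mul_ite, ite_mul, mul_one, mul_zero, zero_mul,
        Finset.sum_ite_eq, Finset.sum_ite_eq', Finset.mem_univ]
      ring
    have hsplit : (∑ a : Fin n, ∑ b : Fin n, S a b (φ y') *
          (pd a (pd b fun w => ψ w k') (φ y') * y' l'
            + pd b (fun w => ψ w k') (φ y') * pd a (fun w => ψ w l') (φ y')
            + (pd a (fun w => ψ w k') (φ y') * pd b (fun w => ψ w l') (φ y')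
              + y' k' * pd a (pd b fun w => ψ w l') (φ y'))))
        = (∑ a : Fin n, ∑ b : Fin n, S a b (φ y') * pd a (pd b fun w => ψ w k') (φ y')) * y' l'
          + (∑ a : Fin n, ∑ b : Fin n, S a b (φ y')
              * (pd b (fun w => ψ w k') (φ y') * pd a (fun w => ψ w l') (φ y')))
          + (∑ a : Fin n, ∑ b : Fin n, S a b (φ y')
              * (pd a (fun w => ψ w k') (φ y') * pd b (fun w => ψ w l') (φ y')))
          + y' k' * (∑ a : Fin n, ∑ b : Fin n, S a b (φ y')
              * pd a (pd b fun w => ψ w l') (φ y')) := by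
      simp only [Finset.sum_mul, Finset.mul_sum, ← Finset.sum_add_distrib]
      exact Finset.sum_congr rfl fun a _ => Finset.sum_congr rfl fun b _ => by ring
    have hsplit2 : (∑ a : Fin n, T a (φ y') *
          (pd a (fun w => ψ w k') (φ y') * y' l' + y' k' * pd a (fun w => ψ w l') (φ y')))
        = (∑ a : Fin n, T a (φ y') * pd a (fun w => ψ w k') (φ y')) * y' l'
          + y' k' * (∑ a : Fin n, T a (φ y') * pd a (fun w => ψ w l') (φ y')) := by
      simp only [Finset.sum_mul, Finset.mul_sum, ← Finset.sum_add_distrib]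
      exact Finset.sum_congr rfl fun a _ => by ring
    have hswap : (∑ a : Fin n, ∑ b : Fin n, S a b (φ y')
          * (pd b (fun w => ψ w k') (φ y') * pd a (fun w => ψ w l') (φ y')))
        = ∑ a : Fin n, ∑ b : Fin n, S a b (φ y')
          * (pd a (fun w => ψ w k') (φ y') * pd b (fun w => ψ w l') (φ y')) := by
      conv_lhs => rw [Finset.sum_comm]
      exact Finset.sum_congr rfl fun a _ => Finset.sum_congr rfl fun b _ => by rw [hSsym b a]
    have hassoc : (∑ a : Fin n, ∑ b : Fin n, S a b (φ y')
          * (pd a (fun w => ψ w k') (φ y') * pd b (fun w => ψ w l') (φ y')))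
        = ∑ a : Fin n, ∑ b : Fin n, S a b (φ y') * pd a (fun z => ψ z k') (φ y')
            * pd b (fun z => ψ z l') (φ y') :=
      Finset.sum_congr rfl fun a _ => Finset.sum_congr rfl fun b _ => by ring
    have hsym' := congrFun (hS'sym l' k') y'
    rw [hsplit, hsplit2, hc1, hc2] at h
    linear_combination (-1 : ℝ) * h - y' l' * (F4 y' hy' k') - y' k' * (F4 y' hy' l')
      - (1/2 : ℝ) * hsym' + (1/2 : ℝ) * hswap + hassoc
  -- F6 : derivative of S' l k
  have F6 : ∀ l : Fin n, pd l (S' l k) y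
      = ∑ c, (∑ a, ∑ b,
          (pd c (S a b) x * pd a (fun z => ψ z l) x * pd b (fun z => ψ z k) x
           + S a b x * pd c (pd a (fun z => ψ z l)) x * pd b (fun z => ψ z k) x
           + S a b x * pd a (fun z => ψ z l) x * pd c (pd b (fun z => ψ z k)) x))
        * pd l (fun z => φ z c) y := by
    intro l
    rw [hxdef]
    have hSd : ∀ a b : Fin n, DifferentiableAt ℝ (S a b) (φ y) :=
      fun a b => diffAt_of_contDiffOn hU (hS a b) hx
    have hJd : ∀ m a : Fin n, DifferentiableAt ℝ (pd a (fun z => ψ z m)) (φ y) :=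
      fun m a => diffAt_of_contDiffOn hU (hJcd m a) hx
    have hGcd : ContDiffOn ℝ (⊤:ℕ∞) (fun x'' => ∑ a, ∑ b, S a b x''
        * pd a (fun z => ψ z l) x'' * pd b (fun z => ψ z k) x'') U := by
      apply ContDiffOn.sum; intro a _; apply ContDiffOn.sum; intro b _
      exact ((hS a b).mul (hJcd l a)).mul (hJcd k b)
    have hev : S' l k =ᶠ[nhds y] (fun y'' => ∑ a, ∑ b, S a b (φ y'')
        * pd a (fun z => ψ z l) (φ y'') * pd b (fun z => ψ z k) (φ y'')) := by
      filter_upwards [hV.mem_nhds hy] with y'' hy''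
      exact F5 y'' hy'' l k
    rw [pd_congr hev l]
    have hGd : DifferentiableAt ℝ (fun x'' => ∑ a, ∑ b, S a b x''
        * pd a (fun z => ψ z l) x'' * pd b (fun z => ψ z k) x'') (φ y) :=
      diffAt_of_contDiffOn hU hGcd hx
    have h1 := pd_comp (φ := φ) (F := fun x'' => ∑ a, ∑ b, S a b x''
        * pd a (fun z => ψ z l) x'' * pd b (fun z => ψ z k) x'') (hφdiff y hy) hGd l
    rw [h1]
    refine Finset.sum_congr rfl fun c _ => ?_
    congr 1
    rw [pd_sum (fun a _ => DifferentiableAt.fun_sum fun b _ =>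
      ((hSd a b).fun_mul (hJd l a)).fun_mul (hJd k b)) c]
    refine Finset.sum_congr rfl fun a _ => ?_
    rw [pd_sum (fun b _ => ((hSd a b).fun_mul (hJd l a)).fun_mul (hJd k b)) c]
    refine Finset.sum_congr rfl fun b _ => ?_
    rw [pd_mul ((hSd a b).fun_mul (hJd l a)) (hJd k b) c, pd_mul (hSd a b) (hJd l a) c]
    ring
  -- F7 : derivative of the log-density
  have F7 : ∀ b : Fin n, pd b (fun x' => Real.log |(jacobian ψ x').det|) x
      = ∑ l, ∑ c, pd c (fun z => φ z l) y * pd b (pd l (fun z => ψ z c)) x := by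
    intro b
    rw [hxdef]
    have hentries : ∀ i j : Fin n, DifferentiableAt ℝ (fun z => jacobian ψ z i j) (φ y) :=
      fun i j => diffAt_of_contDiffOn hU (hJcd i j) hx
    have hdetd : DifferentiableAt ℝ (fun x' => (jacobian ψ x').det) (φ y) := diffAt_det hentries
    have hBA : (Matrix.of fun a m => pd m (fun z => φ z a) y) * jacobian ψ (φ y) = 1 := by
      ext c a
      rw [Matrix.mul_apply, Matrix.one_apply]
      have := F1 c a
      rw [hxdef] at this
      simpa [jacobian] using this
    have hdet1 : (Matrix.of fun a m => pd m (fun z => φ z a) y).det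
        * (jacobian ψ (φ y)).det = 1 := by
      rw [← Matrix.det_mul, hBA, Matrix.det_one]
    have hdet_ne : (jacobian ψ (φ y)).det ≠ 0 := right_ne_zero_of_mul_eq_one hdet1
    have hadj : (jacobian ψ (φ y)).adjugate
        = (jacobian ψ (φ y)).det • (Matrix.of fun a m => pd m (fun z => φ z a) y) := by
      calc (jacobian ψ (φ y)).adjugate = 1 * (jacobian ψ (φ y)).adjugate := (one_mul _).symm
        _ = ((Matrix.of fun a m => pd m (fun z => φ z a) y) * jacobian ψ (φ y))
              * (jacobian ψ (φ y)).adjugate := by rw [hBA]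
        _ = (Matrix.of fun a m => pd m (fun z => φ z a) y)
              * (jacobian ψ (φ y) * (jacobian ψ (φ y)).adjugate) := by rw [Matrix.mul_assoc]
        _ = (Matrix.of fun a m => pd m (fun z => φ z a) y)
              * ((jacobian ψ (φ y)).det • 1) := by rw [Matrix.mul_adjugate]
        _ = (jacobian ψ (φ y)).det • (Matrix.of fun a m => pd m (fun z => φ z a) y) := by
              rw [Matrix.mul_smul, Matrix.mul_one]
    have hfun : (fun x' => Real.log |(jacobian ψ x').det|)
        = fun x' => Real.log ((jacobian ψ x').det) := funext fun x' => Real.log_abs _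
    rw [hfun]
    have hlogd := (hdetd.hasFDerivAt).log hdet_ne
    rw [pd_eq hlogd b]
    simp only [ContinuousLinearMap.smul_apply, smul_eq_mul]
    have hfd : fderiv ℝ (fun x' => (jacobian ψ x').det) (φ y) (Pi.single b 1)
        = pd b (fun x' => (jacobian ψ x').det) (φ y) := rfl
    rw [hfd, pd_det hentries b, hadj]
    simp only [Finset.mul_sum]
    refine Finset.sum_congr rfl fun l _ => Finset.sum_congr rfl fun c _ => ?_
    rw [Matrix.smul_apply, smul_eq_mul]
    have hent : (fun z => jacobian ψ z c l) = pd l (fun w => ψ w c) := rfl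
    rw [hent]
    have hof : (Matrix.of fun a m => pd m (fun z => φ z a) y) l c = pd c (fun z => φ z l) y := rfl
    rw [hof]
    field_simp
  -- F8 : symmetry of second derivatives of ψ-components
  have F8 : ∀ l a b : Fin n, pd a (pd b (fun z => ψ z l)) x
      = pd b (pd a (fun z => ψ z l)) x := fun l a b =>
    pd_pd_symm hU (hψcd l) hx a b
  -- final assembly
  simp only [subSymbol]
  have F4k := F4 y hy k
  rw [← hxdef] at F4k
  simp only [F6, F7]
  rw [F4k]
  simp only [add_mul, sub_mul, Finset.sum_mul, Finset.sum_add_distrib, Finset.sum_sub_distrib]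
  have I1 : (∑ l : Fin n, ∑ c : Fin n, ∑ a : Fin n, ∑ b : Fin n,
        pd c (S a b) x * pd a (fun z => ψ z l) x * pd b (fun z => ψ z k) x
          * pd l (fun z => φ z c) y)
      = ∑ a : Fin n, ∑ b : Fin n, pd b (S b a) x * pd a (fun z => ψ z k) x := by
    calc (∑ l : Fin n, ∑ c : Fin n, ∑ a : Fin n, ∑ b : Fin n,
          pd c (S a b) x * pd a (fun z => ψ z l) x * pd b (fun z => ψ z k) x
            * pd l (fun z => φ z c) y)
        = ∑ l : Fin n, ∑ c : Fin n, ∑ a : Fin n, ∑ b : Fin n,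
            (pd c (S a b) x * pd b (fun z => ψ z k) x) * pd a (fun z => ψ z l) x
              * pd l (fun z => φ z c) y :=
          Finset.sum_congr rfl fun l _ => Finset.sum_congr rfl fun c _ =>
            Finset.sum_congr rfl fun a _ => Finset.sum_congr rfl fun b _ => by ring
      _ = ∑ a : Fin n, ∑ b : Fin n, pd a (S a b) x * pd b (fun z => ψ z k) x :=
          contract_helper F1 (fun c a b => pd c (S a b) x * pd b (fun z => ψ z k) x)
      _ = ∑ a : Fin n, ∑ b : Fin n, pd b (S b a) x * pd a (fun z => ψ z k) x :=
          Finset.sum_comm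
  have I2 : (∑ l : Fin n, ∑ c : Fin n, ∑ a : Fin n, ∑ b : Fin n,
        S a b x * pd a (fun z => ψ z l) x * pd c (pd b (fun z => ψ z k)) x
          * pd l (fun z => φ z c) y)
      = ∑ a : Fin n, ∑ b : Fin n, S a b x * pd a (pd b (fun z => ψ z k)) x := by
    calc (∑ l : Fin n, ∑ c : Fin n, ∑ a : Fin n, ∑ b : Fin n,
          S a b x * pd a (fun z => ψ z l) x * pd c (pd b (fun z => ψ z k)) x
            * pd l (fun z => φ z c) y)
        = ∑ l : Fin n, ∑ c : Fin n, ∑ a : Fin n, ∑ b : Fin n,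
            (S a b x * pd c (pd b (fun z => ψ z k)) x) * pd a (fun z => ψ z l) x
              * pd l (fun z => φ z c) y :=
          Finset.sum_congr rfl fun l _ => Finset.sum_congr rfl fun c _ =>
            Finset.sum_congr rfl fun a _ => Finset.sum_congr rfl fun b _ => by ring
      _ = ∑ a : Fin n, ∑ b : Fin n, S a b x * pd a (pd b (fun z => ψ z k)) x :=
          contract_helper F1 (fun c a b => S a b x * pd c (pd b (fun z => ψ z k)) x)
  have I3 : (∑ a : Fin n, ∑ b : Fin n,
        (S a b x * ∑ l : Fin n, ∑ c : Fin n, pd c (fun z => φ z l) y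
            * pd b (pd l (fun z => ψ z c)) x) * pd a (fun z => ψ z k) x)
      = ∑ l : Fin n, ∑ c : Fin n, ∑ a : Fin n, ∑ b : Fin n,
          S a b x * pd c (pd a (fun z => ψ z l)) x * pd b (fun z => ψ z k) x
            * pd l (fun z => φ z c) y := by
    calc (∑ a : Fin n, ∑ b : Fin n,
          (S a b x * ∑ l : Fin n, ∑ c : Fin n, pd c (fun z => φ z l) y
              * pd b (pd l (fun z => ψ z c)) x) * pd a (fun z => ψ z k) x)
        = ∑ a : Fin n, ∑ b : Fin n, ∑ l : Fin n, ∑ c : Fin n,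
            S a b x * (pd c (fun z => φ z l) y * pd b (pd l (fun z => ψ z c)) x)
              * pd a (fun z => ψ z k) x := by
          refine Finset.sum_congr rfl fun a _ => Finset.sum_congr rfl fun b _ => ?_
          simp only [Finset.mul_sum, Finset.sum_mul]
      _ = ∑ a : Fin n, ∑ b : Fin n, ∑ l : Fin n, ∑ c : Fin n,
            S b a x * (pd c (fun z => φ z l) y * pd a (pd l (fun z => ψ z c)) x)
              * pd b (fun z => ψ z k) x := Finset.sum_comm
      _ = ∑ a : Fin n, ∑ b : Fin n, ∑ l : Fin n, ∑ c : Fin n,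
            S a b x * (pd c (fun z => φ z l) y * pd a (pd l (fun z => ψ z c)) x)
              * pd b (fun z => ψ z k) x := by
          refine Finset.sum_congr rfl fun a _ => Finset.sum_congr rfl fun b _ =>
            Finset.sum_congr rfl fun l _ => Finset.sum_congr rfl fun c _ => ?_
          rw [hSsym b a]
      _ = ∑ a : Fin n, ∑ b : Fin n, ∑ l : Fin n, ∑ c : Fin n,
            S a b x * (pd l (fun z => φ z c) y * pd a (pd c (fun z => ψ z l)) x)
              * pd b (fun z => ψ z k) x := by
          refine Finset.sum_congr rfl fun a _ => Finset.sum_congr rfl fun b _ => ?_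
          exact Finset.sum_comm
      _ = ∑ a : Fin n, ∑ b : Fin n, ∑ l : Fin n, ∑ c : Fin n,
            S a b x * (pd l (fun z => φ z c) y * pd c (pd a (fun z => ψ z l)) x)
              * pd b (fun z => ψ z k) x := by
          refine Finset.sum_congr rfl fun a _ => Finset.sum_congr rfl fun b _ =>
            Finset.sum_congr rfl fun l _ => Finset.sum_congr rfl fun c _ => ?_
          rw [F8 l a c]
      _ = ∑ l : Fin n, ∑ c : Fin n, ∑ a : Fin n, ∑ b : Fin n,
            S a b x * (pd l (fun z => φ z c) y * pd c (pd a (fun z => ψ z l)) x)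
              * pd b (fun z => ψ z k) x :=
          sum_block_swap _
      _ = ∑ l : Fin n, ∑ c : Fin n, ∑ a : Fin n, ∑ b : Fin n,
            S a b x * pd c (pd a (fun z => ψ z l)) x * pd b (fun z => ψ z k) x
              * pd l (fun z => φ z c) y :=
          Finset.sum_congr rfl fun l _ => Finset.sum_congr rfl fun c _ =>
            Finset.sum_congr rfl fun a _ => Finset.sum_congr rfl fun b _ => by ring
  have I4 : (∑ a : Fin n, 2 * T a x * pd a (fun z => ψ z k) x)
      = 2 * ∑ a : Fin n, T a x * pd a (fun z => ψ z k) x := by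
    rw [Finset.mul_sum]
    exact Finset.sum_congr rfl fun a _ => by ring
  linear_combination I1 + I2 + I3.symm + I4
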